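/- Let N be even and b : {1,...,N} → {0,1} be match results with b_n + b_{N+1-n} = 1. Among all permutations r of {1,...,N} such that (i) winners never move down and losers never move up (r_n ≤ n if b_n = 1 and r_n ≥ n if b_n = 0), and (ii) the relative order among winners and among losers is preserved (for m < n with b_m = b_n, r_m < r_n), the permutation that lists all winners in their original order followed by all losers in their original order maximizes sum_{n=1}^N |r_n - n|. -/

import Mathlib

/-- The winners-first-then-losers re-ranking: the `k`-th winner (in original
order) gets rank `k`, and the losers follow in their original order. -/
def winnersFirst (N : ℕ) (b : ℕ → ℕ) (n : ℕ) : ℕ :=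
  if b n = 1 then ((Finset.Icc 1 n).filter (fun m => b m = 1)).card
  else ((Finset.Icc 1 N).filter (fun m => b m = 1)).card
      + ((Finset.Icc 1 n).filter (fun m => b m = 0)).card

/-- Among all re-rankings `r` of `{1,...,N}` such that winners
never move down, losers never move up, and the relative order among winners
(resp. losers) is preserved, the winners-first-then-losers permutation
maximizes `∑ |r n - n|`. -/

lemma sum_Icc_card_le (s : Finset ℕ) (h0 : 0 ∉ s) :
    ∑ k ∈ Finset.Icc 1 s.card, k ≤ ∑ x ∈ s, x := by
  induction s using Finset.induction_on_max with
  | empty => simp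
  | insert a s ha ih =>
    have hna : a ∉ s := fun h => lt_irrefl a (ha a h)
    have h0s : 0 ∉ s := fun h => h0 (Finset.mem_insert_of_mem h)
    have hsub : insert a s ⊆ Finset.Icc 1 a := by
      intro x hx
      rcases Finset.mem_insert.mp hx with rfl | hx
      · simp [Nat.one_le_iff_ne_zero]; rintro rfl; exact h0 (Finset.mem_insert_self 0 s)
      · have := ha x hx
        have hx1 : 1 ≤ x := Nat.one_le_iff_ne_zero.mpr (by rintro rfl; exact h0s hx)
        exact Finset.mem_Icc.mpr ⟨hx1, le_of_lt this⟩
    have hcard : s.card + 1 ≤ a := by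
      have := Finset.card_le_card hsub
      simpa [Finset.card_insert_of_notMem hna, Nat.card_Icc] using this
    rw [Finset.card_insert_of_notMem hna, Finset.sum_insert hna,
      Finset.sum_Icc_succ_top (by omega : 1 ≤ s.card + 1)]
    have := ih h0s
    omega

lemma rank_sum (s : Finset ℕ) :
    ∑ n ∈ s, (s.filter (fun m => m ≤ n)).card = ∑ k ∈ Finset.Icc 1 s.card, k := by
  induction s using Finset.induction_on_max with
  | empty => simp
  | insert a s ha ih =>
    have hna : a ∉ s := fun h => lt_irrefl a (ha a h)
    rw [Finset.sum_insert hna, Finset.card_insert_of_notMem hna,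
      Finset.sum_Icc_succ_top (by omega : 1 ≤ s.card + 1)]
    have h1 : (insert a s).filter (fun m => m ≤ a) = insert a s := by
      apply Finset.filter_true_of_mem
      intro x hx
      rcases Finset.mem_insert.mp hx with rfl | hx
      · exact le_refl _
      · exact le_of_lt (ha x hx)
    have h2 : ∀ n ∈ s, ((insert a s).filter (fun m => m ≤ n)).card
        = (s.filter (fun m => m ≤ n)).card := by
      intro n hn
      congr 1
      rw [Finset.filter_insert, if_neg (by exact not_le.mpr (ha n hn))]
    rw [h1, Finset.card_insert_of_notMem hna, Finset.sum_congr rfl h2, ih]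
    omega

lemma sum_Icc_split (W L : ℕ) :
    ∑ k ∈ Finset.Icc 1 (W + L), k
      = L * W + ∑ k ∈ Finset.Icc 1 L, k + ∑ k ∈ Finset.Icc 1 W, k := by
  induction L with
  | zero => simp
  | succ L ih =>
    rw [show W + (L+1) = (W+L)+1 by omega,
      Finset.sum_Icc_succ_top (by omega : 1 ≤ W + L + 1),
      Finset.sum_Icc_succ_top (by omega : 1 ≤ L + 1), ih]
    ring

theorem winnersFirst_maximizes (N : ℕ) (hN : Even N) (hNpos : 0 < N) (b : ℕ → ℕ)
    (hb01 : ∀ n, b n = 0 ∨ b n = 1)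
    (hanti : ∀ n, 1 ≤ n → n ≤ N → b n + b (N + 1 - n) = 1)
    (r : ℕ → ℕ) (hr : Set.BijOn r (Set.Icc 1 N) (Set.Icc 1 N))
    (hwin : ∀ n ∈ Finset.Icc 1 N, b n = 1 → r n ≤ n)
    (hlose : ∀ n ∈ Finset.Icc 1 N, b n = 0 → n ≤ r n)
    (horder : ∀ m ∈ Finset.Icc 1 N, ∀ n ∈ Finset.Icc 1 N,
        m < n → b m = b n → r m < r n) :
    ∑ n ∈ Finset.Icc 1 N, ((r n : ℤ) - n).natAbs
      ≤ ∑ n ∈ Finset.Icc 1 N, ((winnersFirst N b n : ℤ) - n).natAbs := by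
  classical
  set S := Finset.Icc 1 N with hS
  set Wset := S.filter (fun n => b n = 1) with hWset
  set Lset := S.filter (fun n => b n = 0) with hLset
  have hLnot : S.filter (fun n => ¬ b n = 1) = Lset := by
    apply Finset.filter_congr
    intro n _
    rcases hb01 n with h | h <;> simp [h]
  -- winnersFirst values on winners and losers
  have hwfW : ∀ n ∈ Wset, winnersFirst N b n = (Wset.filter (fun m => m ≤ n)).card := by
    intro n hn
    rw [hWset, Finset.mem_filter] at hn
    obtain ⟨hnS, hbn⟩ := hn
    rw [hS, Finset.mem_Icc] at hnS
    rw [winnersFirst, if_pos hbn]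
    congr 1
    ext m
    simp only [Finset.mem_filter, Finset.mem_Icc, hWset, hS]
    constructor
    · rintro ⟨⟨h1, h2⟩, h3⟩; exact ⟨⟨⟨h1, le_trans h2 hnS.2⟩, h3⟩, h2⟩
    · rintro ⟨⟨⟨h1, _⟩, h3⟩, h2⟩; exact ⟨⟨h1, h2⟩, h3⟩
  have hwfL : ∀ n ∈ Lset,
      winnersFirst N b n = Wset.card + (Lset.filter (fun m => m ≤ n)).card := by
    intro n hn
    rw [hLset, Finset.mem_filter] at hn
    obtain ⟨hnS, hbn⟩ := hn
    rw [hS, Finset.mem_Icc] at hnS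
    rw [winnersFirst, if_neg (by omega)]
    have hfe : (Finset.Icc 1 n).filter (fun m => b m = 0)
        = Lset.filter (fun m => m ≤ n) := by
      ext m
      simp only [Finset.mem_filter, Finset.mem_Icc, hLset, hS]
      constructor
      · rintro ⟨⟨h1, h2⟩, h3⟩; exact ⟨⟨⟨h1, le_trans h2 hnS.2⟩, h3⟩, h2⟩
      · rintro ⟨⟨⟨h1, _⟩, h3⟩, h2⟩; exact ⟨⟨h1, h2⟩, h3⟩
    rw [hfe, hWset, hS]
  -- pointwise bounds for winnersFirst
  have hwfW_le : ∀ n ∈ Wset, winnersFirst N b n ≤ n := by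
    intro n hn
    rw [hwfW n hn]
    have h1 : Wset.filter (fun m => m ≤ n) ⊆ Finset.Icc 1 n := by
      intro m hm
      rw [Finset.mem_filter, hWset, Finset.mem_filter, hS, Finset.mem_Icc] at hm
      exact Finset.mem_Icc.mpr ⟨hm.1.1.1, hm.2⟩
    calc (Wset.filter (fun m => m ≤ n)).card ≤ (Finset.Icc 1 n).card :=
          Finset.card_le_card h1
      _ = n := by rw [Nat.card_Icc]; omega
  have hwfL_ge : ∀ n ∈ Lset, n ≤ winnersFirst N b n := by
    intro n hn
    have hn' := hn
    rw [hLset, Finset.mem_filter, hS, Finset.mem_Icc] at hn'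
    rw [hwfL n hn]
    have hsplit : ((Finset.Icc 1 n).filter (fun m => b m = 1)).card
        + ((Finset.Icc 1 n).filter (fun m => ¬ b m = 1)).card = n := by
      rw [Finset.card_filter_add_card_filter_not, Nat.card_Icc]; omega
    have hsub1 : ((Finset.Icc 1 n).filter (fun m => b m = 1)).card ≤ Wset.card := by
      apply Finset.card_le_card
      intro m hm
      rw [Finset.mem_filter, Finset.mem_Icc] at hm
      rw [hWset, Finset.mem_filter, hS, Finset.mem_Icc]
      exact ⟨⟨hm.1.1, le_trans hm.1.2 hn'.1.2⟩, hm.2⟩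
    have hsub2 : (Finset.Icc 1 n).filter (fun m => ¬ b m = 1)
        ⊆ Lset.filter (fun m => m ≤ n) := by
      intro m hm
      rw [Finset.mem_filter, Finset.mem_Icc] at hm
      rw [Finset.mem_filter, hLset, Finset.mem_filter, hS, Finset.mem_Icc]
      rcases hb01 m with h | h
      · exact ⟨⟨⟨hm.1.1, le_trans hm.1.2 hn'.1.2⟩, h⟩, hm.1.2⟩
      · exact absurd h hm.2
    have := Finset.card_le_card hsub2
    omega
  -- sum of r over S equals sum of identity
  have hsum_r : ∑ n ∈ S, r n = ∑ n ∈ S, n := by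
    apply Finset.sum_bij (fun n _ => r n)
    · intro a ha
      rw [hS, Finset.mem_Icc] at ha ⊢
      have := hr.mapsTo (Set.mem_Icc.mpr ⟨ha.1, ha.2⟩)
      exact Set.mem_Icc.mp this
    · intro a ha c hc h
      rw [hS, Finset.mem_Icc] at ha hc
      exact hr.injOn (Set.mem_Icc.mpr ha) (Set.mem_Icc.mpr hc) h
    · intro c hc
      rw [hS, Finset.mem_Icc] at hc
      obtain ⟨a, ha, hac⟩ := hr.surjOn (Set.mem_Icc.mpr hc)
      rw [Set.mem_Icc] at ha
      exact ⟨a, by rw [hS, Finset.mem_Icc]; exact ha, hac⟩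
    · intro a _; rfl
  -- r is at least the minimal possible on winners
  have hmin : ∑ k ∈ Finset.Icc 1 Wset.card, k ≤ ∑ n ∈ Wset, r n := by
    have hinj : Set.InjOn r Wset := by
      intro x hx y hy h
      rw [Finset.mem_coe, hWset, Finset.mem_filter, hS, Finset.mem_Icc] at hx hy
      exact hr.injOn (Set.mem_Icc.mpr hx.1) (Set.mem_Icc.mpr hy.1) h
    have himg : ∑ x ∈ Wset.image r, x = ∑ n ∈ Wset, r n :=
      Finset.sum_image (fun x hx y hy h => hinj hx hy h)
    rw [← himg]
    have hcard : (Wset.image r).card = Wset.card :=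
      Finset.card_image_of_injOn hinj
    have h0 : 0 ∉ Wset.image r := by
      intro h
      obtain ⟨x, hx, hx0⟩ := Finset.mem_image.mp h
      rw [hWset, Finset.mem_filter, hS, Finset.mem_Icc] at hx
      have := hr.mapsTo (Set.mem_Icc.mpr hx.1)
      rw [hx0] at this
      exact absurd (Set.mem_Icc.mp this).1 (by omega)
    rw [← hcard]
    exact sum_Icc_card_le _ h0
  -- sums of winnersFirst
  have hsumW : ∑ n ∈ Wset, winnersFirst N b n = ∑ k ∈ Finset.Icc 1 Wset.card, k := by
    rw [Finset.sum_congr rfl hwfW, rank_sum]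
  have hsumL : ∑ n ∈ Lset, winnersFirst N b n
      = Lset.card * Wset.card + ∑ k ∈ Finset.Icc 1 Lset.card, k := by
    rw [Finset.sum_congr rfl hwfL, Finset.sum_add_distrib, Finset.sum_const,
      rank_sum, smul_eq_mul]
  -- cardinality bookkeeping
  have hWL : Wset.card + Lset.card = N := by
    have h := Finset.card_filter_add_card_filter_not (s := S) (p := fun n => b n = 1)
    rw [hLnot, ← hWset] at h
    have hc : S.card = N := by rw [hS, Nat.card_Icc]; omega
    omega
  have hsumS : ∑ n ∈ S, n = Lset.card * Wset.card + ∑ k ∈ Finset.Icc 1 Lset.card, k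
      + ∑ k ∈ Finset.Icc 1 Wset.card, k := by
    have : ∑ n ∈ S, n = ∑ k ∈ Finset.Icc 1 (Wset.card + Lset.card), k := by
      rw [hWL, hS]
    rw [this, sum_Icc_split]
  -- key natural-number inequality
  have key : ∑ n ∈ Lset, r n + ∑ n ∈ Wset, winnersFirst N b n
      ≤ ∑ n ∈ Lset, winnersFirst N b n + ∑ n ∈ Wset, r n := by
    have hsplit : ∑ n ∈ Wset, r n + ∑ n ∈ Lset, r n = ∑ n ∈ S, n := by
      rw [← hsum_r, ← hLnot, Finset.sum_filter_add_sum_filter_not]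
    set P := Lset.card * Wset.card
    set SL := ∑ k ∈ Finset.Icc 1 Lset.card, k
    set SW := ∑ k ∈ Finset.Icc 1 Wset.card, k
    omega
  -- now convert the goal
  rw [← Finset.sum_filter_add_sum_filter_not S (fun n => b n = 1), hLnot,
    ← Finset.sum_filter_add_sum_filter_not S (fun n => b n = 1)
      (fun n => ((winnersFirst N b n : ℤ) - n).natAbs), hLnot]
  have e1 : ∀ n ∈ Wset, ((r n : ℤ) - n).natAbs = n - r n := by
    intro n hn
    rw [hWset, Finset.mem_filter] at hn
    have := hwin n hn.1 hn.2
    omega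
  have e2 : ∀ n ∈ Lset, ((r n : ℤ) - n).natAbs = r n - n := by
    intro n hn
    rw [hLset, Finset.mem_filter] at hn
    have := hlose n hn.1 hn.2
    omega
  have e3 : ∀ n ∈ Wset, ((winnersFirst N b n : ℤ) - n).natAbs = n - winnersFirst N b n := by
    intro n hn
    have := hwfW_le n hn
    omega
  have e4 : ∀ n ∈ Lset, ((winnersFirst N b n : ℤ) - n).natAbs = winnersFirst N b n - n := by
    intro n hn
    have := hwfL_ge n hn
    omega
  rw [Finset.sum_congr rfl e1, Finset.sum_congr rfl e2,
    Finset.sum_congr rfl e3, Finset.sum_congr rfl e4]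
  have s1 : ∑ n ∈ Wset, (n - r n) = ∑ n ∈ Wset, n - ∑ n ∈ Wset, r n := by
    apply Finset.sum_tsub_distrib
    intro n hn
    rw [hWset, Finset.mem_filter] at hn
    exact hwin n hn.1 hn.2
  have s2 : ∑ n ∈ Lset, (r n - n) = ∑ n ∈ Lset, r n - ∑ n ∈ Lset, n := by
    apply Finset.sum_tsub_distrib
    intro n hn
    rw [hLset, Finset.mem_filter] at hn
    exact hlose n hn.1 hn.2
  have s3 : ∑ n ∈ Wset, (n - winnersFirst N b n)
      = ∑ n ∈ Wset, n - ∑ n ∈ Wset, winnersFirst N b n :=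
    Finset.sum_tsub_distrib _ hwfW_le
  have s4 : ∑ n ∈ Lset, (winnersFirst N b n - n)
      = ∑ n ∈ Lset, winnersFirst N b n - ∑ n ∈ Lset, n :=
    Finset.sum_tsub_distrib _ hwfL_ge
  rw [s1, s2, s3, s4]
  have m1 : ∑ n ∈ Wset, r n ≤ ∑ n ∈ Wset, n :=
    Finset.sum_le_sum (fun n hn => by
      rw [hWset, Finset.mem_filter] at hn; exact hwin n hn.1 hn.2)
  have m2 : ∑ n ∈ Lset, n ≤ ∑ n ∈ Lset, r n :=
    Finset.sum_le_sum (fun n hn => by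
      rw [hLset, Finset.mem_filter] at hn; exact hlose n hn.1 hn.2)
  have m3 : ∑ n ∈ Wset, winnersFirst N b n ≤ ∑ n ∈ Wset, n :=
    Finset.sum_le_sum hwfW_le
  have m4 : ∑ n ∈ Lset, n ≤ ∑ n ∈ Lset, winnersFirst N b n :=
    Finset.sum_le_sum hwfL_ge
  omega
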